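/- Let T be a self-adjoint closed range operator on a complex Hilbert space. If ‖P_T − T‖ < 1 (convergence of the projection proper splitting), then ‖P_T − |T|‖ < 1 (convergence of the polar proper splitting) and ‖P_T − |T|‖ ≤ ‖P_T − T‖. -/

import Mathlib

open ContinuousLinearMap

open ComplexInnerProductSpace RCLike in
private lemma aux_norm_le_of_quadform {H : Type*} [NormedAddCommGroup H] [InnerProductSpace ℂ H]
    [CompleteSpace H] (A : H →L[ℂ] H) (hA : IsSelfAdjoint A) {c : ℝ} (hc : 0 ≤ c)
    (h : ∀ x, |(re ⟪A x, x⟫ : ℝ)| ≤ c * ‖x‖ ^ 2) : ‖A‖ ≤ c := by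
  refine A.opNorm_le_bound hc fun x => ?_
  by_cases hAx : A x = 0
  · simp [hAx]; positivity
  have hx : x ≠ 0 := fun h0 => hAx (by simp [h0])
  have hxn : (0:ℝ) < ‖x‖ := norm_pos_iff.mpr hx
  have hAxn : (0:ℝ) < ‖A x‖ := norm_pos_iff.mpr hAx
  set y : H := (‖x‖ / ‖A x‖ : ℝ) • A x with hy
  have hyn : ‖y‖ = ‖x‖ := by
    rw [hy, norm_smul]
    simp [abs_of_nonneg (le_of_lt (div_pos hxn hAxn)), div_mul_cancel₀, hAxn.ne']
  have hsym : ∀ a b : H, re ⟪A b, a⟫ = re ⟪A a, b⟫ := by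
    intro a b
    rw [show (inner ℂ (A b) a : ℂ) = inner ℂ b (A a) from hA.isSymmetric b a]
    exact inner_re_symm _ _
  have expand : re ⟪A (x + y), x + y⟫ - re ⟪A (x - y), x - y⟫ = 4 * re ⟪A x, y⟫ := by
    simp only [map_add, map_sub, inner_add_left, inner_add_right, inner_sub_left,
      inner_sub_right, map_add, map_sub]
    rw [hsym x y]
    ring
  have hkey : re ⟪A x, y⟫ = ‖x‖ * ‖A x‖ := by
    rw [hy, ← algebraMap_smul ℂ (‖x‖ / ‖A x‖) (A x), algebraMap_eq_ofReal,
      inner_smul_right, re_ofReal_mul, inner_self_eq_norm_sq (𝕜 := ℂ)]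
    field_simp
  have hpar : ‖x + y‖ * ‖x + y‖ + ‖x - y‖ * ‖x - y‖ = 2 * (‖x‖ * ‖x‖ + ‖y‖ * ‖y‖) :=
    by simpa only [pow_two] using parallelogram_law_with_norm ℂ x y
  have h1 := (abs_le.mp (h (x + y))).2
  have h2 := (abs_le.mp (h (x - y))).1
  have h3 : 4 * (‖x‖ * ‖A x‖) ≤ 4 * (c * ‖x‖ ^ 2) := by
    rw [← hkey, ← expand]
    rw [hyn] at hpar
    nlinarith [h1, h2]
  have h4 : ‖x‖ * ‖A x‖ ≤ c * ‖x‖ ^ 2 := by linarith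
  rw [pow_two] at h4
  have := (mul_le_mul_iff_right₀ hxn).mp
    (by rw [mul_comm c] at h4; linarith [h4] : ‖x‖ * ‖A x‖ ≤ ‖x‖ * (c * ‖x‖))
  linarith

/-- `Td` is the Moore–Penrose inverse of `T`. -/
def IsMoorePenroseInverse {H : Type*} [NormedAddCommGroup H] [InnerProductSpace ℂ H]
    [CompleteSpace H] (T Td : H →L[ℂ] H) : Prop :=
  T ∘L Td ∘L T = T ∧ Td ∘L T ∘L Td = Td ∧
    IsSelfAdjoint (T ∘L Td) ∧ IsSelfAdjoint (Td ∘L T)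

open ComplexInnerProductSpace RCLike in
set_option maxHeartbeats 1000000 in
/-- For self-adjoint closed range `T`, convergence of the projection proper splitting
implies convergence of the polar proper splitting, with `‖P_T - |T|‖ ≤ ‖P_T - T‖`. -/
theorem projection_splitting_implies_polar_splitting
    {H : Type*} [NormedAddCommGroup H] [InnerProductSpace ℂ H] [CompleteSpace H]
    (T R P : H →L[ℂ] H)
    (hT : IsSelfAdjoint T)
    (hTcr : IsClosed (LinearMap.range (T : H →ₗ[ℂ] H) : Set H))
    -- R = |T|
    (hR : R.IsPositive) (hR2 : R ∘L R = adjoint T ∘L T)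
    -- P is the orthogonal projection onto ran T
    (hP : IsSelfAdjoint P) (hP2 : P ∘L P = P)
    (hPran : LinearMap.range (P : H →ₗ[ℂ] H) = LinearMap.range (T : H →ₗ[ℂ] H))
    (hconv : ‖P - T‖ < 1) :
    ‖P - R‖ < 1 ∧ ‖P - R‖ ≤ ‖P - T‖ := by
  set c : ℝ := ‖P - T‖ with hc
  have hc0 : 0 ≤ c := norm_nonneg _
  -- T ≤ R (i.e. T ≤ |T|)
  have hTleR : T ≤ R := by
    have hRR : R * R = T * T := by
      have := hR2; rw [hT.adjoint_eq] at this; exact this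
    have hR0 : (0 : H →L[ℂ] H) ≤ R := (nonneg_iff_isPositive R).mpr hR
    have hb0 : (0 : H →L[ℂ] H) ≤ T⁺ + T⁻ :=
      add_nonneg (CFC.posPart_nonneg T) (CFC.negPart_nonneg T)
    have hbb : (T⁺ + T⁻) * (T⁺ + T⁻) = T * T := by
      conv_rhs => rw [← CFC.posPart_sub_negPart T hT]
      simp only [mul_add, add_mul, mul_sub, sub_mul, CFC.posPart_mul_negPart,
        CFC.negPart_mul_posPart]
      abel
    have hReq : R = T⁺ + T⁻ := by
      rw [← CFC.sqrt_unique hRR hR0, ← CFC.sqrt_unique hbb hb0]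
    calc T ≤ T⁺ := CFC.le_posPart hT
      _ ≤ T⁺ + T⁻ := le_add_of_nonneg_right (CFC.negPart_nonneg T)
      _ = R := hReq.symm
  have hRTpos : (R - T).IsPositive := hTleR
  -- P is idempotent pointwise
  have hPapp : ∀ z, P (P z) = P z := fun z => by
    have := DFunLike.congr_fun hP2 z
    simpa using this
  -- ‖R z‖ = ‖T z‖
  have normR : ∀ z, ‖R z‖ = ‖T z‖ := by
    intro z
    have h1 : ‖R z‖ ^ 2 = ‖T z‖ ^ 2 := by
      rw [apply_norm_sq_eq_inner_adjoint_left R z, apply_norm_sq_eq_inner_adjoint_left T z,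
        hR.isSelfAdjoint.adjoint_eq, hR2]
    have := congrArg Real.sqrt h1
    rwa [Real.sqrt_sq (norm_nonneg _), Real.sqrt_sq (norm_nonneg _)] at this
  -- upper bound for the quadratic form
  have upper : ∀ x, re ⟪(P - R) x, x⟫ ≤ c * ‖x‖ ^ 2 := by
    intro x
    have hsplit : re ⟪(P - R) x, x⟫ = re ⟪(P - T) x, x⟫ - re ⟪(R - T) x, x⟫ := by
      simp only [sub_apply, inner_sub_left, map_sub]
      ring
    have h1 : re ⟪(P - T) x, x⟫ ≤ c * ‖x‖ ^ 2 := by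
      calc re ⟪(P - T) x, x⟫ ≤ ‖(inner ℂ ((P - T) x) x : ℂ)‖ := re_le_norm _
        _ ≤ ‖(P - T) x‖ * ‖x‖ := norm_inner_le_norm _ _
        _ ≤ (c * ‖x‖) * ‖x‖ := mul_le_mul_of_nonneg_right ((P - T).le_opNorm x) (norm_nonneg x)
        _ = c * ‖x‖ ^ 2 := by ring
    have h2 := hRTpos.inner_nonneg_left x
    rw [hsplit]
    linarith [(RCLike.nonneg_iff.mp h2).1]
  -- lower bound for the quadratic form
  have lower : ∀ x, -(c * ‖x‖ ^ 2) ≤ re ⟪(P - R) x, x⟫ := by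
    intro x
    set u : H := P x with hu
    set v : H := x - P x with hv
    have huv : u + v = x := by rw [hu, hv]; abel
    have hPu : P u = u := hPapp x
    have hPv : P v = 0 := by rw [hv, map_sub, hPapp x, sub_self]
    -- T v = 0
    have hTv : T v = 0 := by
      have hmem : T (T v) ∈ LinearMap.range (T : H →ₗ[ℂ] H) := LinearMap.mem_range_self (T : H →ₗ[ℂ] H) (T v)
      rw [← hPran] at hmem
      obtain ⟨y, hy⟩ := hmem
      have h0 : (inner ℂ (P y) v : ℂ) = 0 := by
        have h0' := adjoint_inner_left P v y
        rw [hP.adjoint_eq] at h0'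
        rw [h0', hPv, inner_zero_right]
      have h1 : (inner ℂ (T (T v)) v : ℂ) = inner ℂ (T v) (T v) := by
        have h1' := adjoint_inner_left T v (T v)
        rwa [hT.adjoint_eq] at h1'
      have h2 : (inner ℂ (T v) (T v) : ℂ) = 0 := by
        rw [← h1, ← show P y = T (T v) from hy, h0]
      exact inner_self_eq_zero.mp h2
    have hRv : R v = 0 := norm_eq_zero.mp (by rw [normR v, hTv, norm_zero])
    have hRx : R x = R u := by
      conv_lhs => rw [← huv]
      rw [map_add, hRv, add_zero]
    -- ‖u‖ ≤ ‖x‖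
    have hu_le : ‖u‖ ≤ ‖x‖ := by
      have h1 : (inner ℂ u u : ℂ) = inner ℂ x u := by
        have h1' := adjoint_inner_left P u x
        rw [hP.adjoint_eq] at h1'
        nth_rewrite 1 [hu]
        rw [h1', hPu]
      have h2 : ‖u‖ ^ 2 ≤ ‖x‖ * ‖u‖ := by
        calc ‖u‖ ^ 2 = re (inner ℂ u u : ℂ) := (inner_self_eq_norm_sq (𝕜 := ℂ) u).symm
          _ ≤ ‖(inner ℂ x u : ℂ)‖ := by rw [h1]; exact re_le_norm _
          _ ≤ ‖x‖ * ‖u‖ := norm_inner_le_norm _ _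
      rcases eq_or_lt_of_le (norm_nonneg u) with h | h
      · rw [← h]; exact norm_nonneg x
      · rw [pow_two] at h2
        exact le_of_mul_le_mul_right (by rw [mul_comm ‖u‖ ‖u‖] at h2; linarith) h
    -- orthogonality
    have huv_orth : (inner ℂ u v : ℂ) = 0 := by
      have h1' := adjoint_inner_left P v x
      rw [hP.adjoint_eq] at h1'
      rw [hu, h1', hPv, inner_zero_right]
    have hRuv : (inner ℂ (R u) v : ℂ) = 0 := by
      have h1' := adjoint_inner_left R v u
      rw [hR.isSelfAdjoint.adjoint_eq] at h1'
      rw [h1', hRv, inner_zero_right]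
    -- ‖T u‖ bound
    have hTu_le : ‖T u‖ ≤ (1 + c) * ‖u‖ := by
      have hTu : T u = u - (P - T) u := by
        simp [sub_apply, hPu]
      calc ‖T u‖ = ‖u - (P - T) u‖ := by rw [← hTu]
        _ ≤ ‖u‖ + ‖(P - T) u‖ := norm_sub_le _ _
        _ ≤ ‖u‖ + c * ‖u‖ := by linarith [(P - T).le_opNorm u]
        _ = (1 + c) * ‖u‖ := by ring
    -- the P part
    have hPform : re ⟪P x, x⟫ = ‖u‖ ^ 2 := by
      rw [← hu, ← huv, inner_add_right, map_add, huv_orth, map_zero, add_zero,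
        inner_self_eq_norm_sq (𝕜 := ℂ)]
    -- the R part
    have hRform : re ⟪R x, x⟫ ≤ (1 + c) * ‖u‖ ^ 2 := by
      have h5 : re ⟪R x, x⟫ = re ⟪R u, u⟫ := by
        rw [hRx, ← huv, inner_add_right, map_add, hRuv, map_zero, add_zero]
      rw [h5]
      calc re ⟪R u, u⟫ ≤ ‖(inner ℂ (R u) u : ℂ)‖ := re_le_norm _
        _ ≤ ‖R u‖ * ‖u‖ := norm_inner_le_norm _ _
        _ = ‖T u‖ * ‖u‖ := by rw [normR u]
        _ ≤ ((1 + c) * ‖u‖) * ‖u‖ := mul_le_mul_of_nonneg_right hTu_le (norm_nonneg u)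
        _ = (1 + c) * ‖u‖ ^ 2 := by ring
    have hsplit : re ⟪(P - R) x, x⟫ = re ⟪P x, x⟫ - re ⟪R x, x⟫ := by
      simp only [sub_apply, inner_sub_left, map_sub]
    have hu2 : ‖u‖ ^ 2 ≤ ‖x‖ ^ 2 := by
      have := hu_le
      nlinarith [norm_nonneg u]
    rw [hsplit, hPform]
    nlinarith [hRform, hu2]
  -- conclude
  have habs : ∀ x, |(re ⟪(P - R) x, x⟫ : ℝ)| ≤ c * ‖x‖ ^ 2 := fun x =>
    abs_le.mpr ⟨lower x, upper x⟩
  have hnorm : ‖P - R‖ ≤ c :=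
    aux_norm_le_of_quadform (P - R) (hP.sub hR.isSelfAdjoint) hc0 habs
  exact ⟨lt_of_le_of_lt hnorm hconv, hnorm⟩
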